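/- Let h : ℝⁿ → ℝ be a C¹ convex function satisfying ν(s+|ξ|)^p ≤ h(ξ) ≤ L(s+|ξ|)^p for all ξ ∈ ℝⁿ, where p > 1, s ∈ [0,1], 0 < ν ≤ 1 ≤ L. Then there is a constant c depending only on p and L such that |∂h(ξ)| ≤ c(s+|ξ|)^{p−1} for all ξ ∈ ℝⁿ. -/

import Mathlib

-- subgradient inequality
lemma subgrad {E : Type*} [NormedAddCommGroup E] [NormedSpace ℝ E]
    (h : E → ℝ) (hd : Differentiable ℝ h) (hc : ConvexOn ℝ Set.univ h)
    (ξ w : E) : h ξ + fderiv ℝ h ξ w ≤ h (ξ + w) := by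
  set g : ℝ → ℝ := fun r => h (ξ + r • w) with hg
  have hgc : ConvexOn ℝ Set.univ g := by
    have h2 := (hc.comp_affineMap (AffineMap.lineMap ξ (ξ + w) : ℝ →ᵃ[ℝ] E)).subset
      (Set.subset_univ _) convex_univ
    have hfun : g = h ∘ (AffineMap.lineMap ξ (ξ + w) : ℝ →ᵃ[ℝ] E) := by
      funext r
      simp [hg, AffineMap.lineMap_apply, add_sub_cancel_left, add_comm]
    rw [hfun]; exact h2
  have hgd : HasDerivAt g (fderiv ℝ h ξ w) 0 := by
    have h1 : HasDerivAt (fun r : ℝ => ξ + r • w) w 0 := by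
      simpa using ((hasDerivAt_id (0:ℝ)).smul_const w).const_add ξ
    have := ((hd (ξ + (0:ℝ) • w)).hasFDerivAt.comp_hasDerivAt 0 h1)
    simp only [zero_smul, add_zero] at this
    exact this
  have := hgc.le_slope_of_hasDerivAt (Set.mem_univ 0) (Set.mem_univ 1) one_pos hgd
  have hs : slope g 0 1 = h (ξ + w) - h ξ := by
    simp [slope, hg]
  linarith [this.trans_eq hs]

/-- If `h : ℝⁿ → ℝ` is `C¹`, convex and satisfies `ν(s+|ξ|)^p ≤ h(ξ) ≤ L(s+|ξ|)^p`
(`p > 1`, `s ∈ [0,1]`, `0 < ν ≤ 1 ≤ L`), then `|∂h(ξ)| ≤ c(p,L)(s+|ξ|)^(p-1)`. -/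
theorem gradient_growth_of_convex (n : ℕ) (p s ν L : ℝ)
    (hp : 1 < p) (hs : s ∈ Set.Icc (0:ℝ) 1) (hν : 0 < ν) (hν1 : ν ≤ 1) (hL : 1 ≤ L) :
    ∃ c : ℝ, 0 < c ∧
      ∀ h : EuclideanSpace ℝ (Fin n) → ℝ,
        ContDiff ℝ 1 h →
        ConvexOn ℝ Set.univ h →
        (∀ ξ, ν * (s + ‖ξ‖) ^ p ≤ h ξ) →
        (∀ ξ, h ξ ≤ L * (s + ‖ξ‖) ^ p) →
        ∀ ξ : EuclideanSpace ℝ (Fin n), ‖fderiv ℝ h ξ‖ ≤ c * (s + ‖ξ‖) ^ (p - 1) := by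
  refine ⟨2 ^ p * L, by positivity, fun h hcd hconv hlow hup ξ => ?_⟩
  have hd : Differentiable ℝ h := hcd.differentiable one_ne_zero
  have hs0 : 0 ≤ s := hs.1
  set t : ℝ := s + ‖ξ‖ with ht
  have ht0 : 0 ≤ t := by positivity
  have hnn : ∀ η, 0 ≤ h η := fun η =>
    le_trans (by positivity) (hlow η)
  rcases eq_or_lt_of_le ht0 with ht0' | htpos
  · -- t = 0 : s = 0 and ξ = 0, so h has a minimum at ξ
    have hs0' : s = 0 := le_antisymm (by nlinarith [norm_nonneg ξ]) hs0
    have hξ0 : ‖ξ‖ = 0 := by nlinarith [norm_nonneg ξ]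
    have hmin : IsLocalMin h ξ := by
      have hh0 : h ξ ≤ 0 := by
        have := hup ξ
        rw [hs0', hξ0] at this
        simpa [Real.zero_rpow (by linarith : p ≠ 0)] using this
      exact Filter.Eventually.of_forall fun η => le_trans hh0 (hnn η)
    rw [hmin.fderiv_eq_zero]
    rw [← ht0', Real.zero_rpow (by intro hc; nlinarith : p - 1 ≠ 0)]
    simp
  · -- t > 0
    have key : ∀ x : EuclideanSpace ℝ (Fin n),
        fderiv ℝ h ξ x ≤ 2 ^ p * L * t ^ (p - 1) * ‖x‖ := by
      intro x
      rcases eq_or_ne x 0 with rfl | hx0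
      · simp
      have hxn : (0:ℝ) < ‖x‖ := norm_pos_iff.mpr hx0
      set w := (t / ‖x‖) • x with hw
      have hwn : ‖w‖ = t := by
        rw [hw, norm_smul, Real.norm_eq_abs, abs_of_pos (by positivity),
          div_mul_cancel₀ _ (ne_of_gt hxn)]
      have h1 := subgrad h hd hconv ξ w
      have h2 : h (ξ + w) ≤ L * (2 * t) ^ p := by
        refine le_trans (hup _) ?_
        have hb : s + ‖ξ + w‖ ≤ 2 * t := by
          have := norm_add_le ξ w
          rw [hwn] at this
          simp only [ht]; linarith
        exact mul_le_mul_of_nonneg_left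
          (Real.rpow_le_rpow (by positivity) hb (by linarith)) (by linarith)
      have h3 : fderiv ℝ h ξ w ≤ L * (2 * t) ^ p := by
        have := hnn ξ; linarith
      have h4 : (2 * t) ^ p = 2 ^ p * (t * t ^ (p - 1)) := by
        rw [Real.mul_rpow (by norm_num) ht0]
        congr 1
        rw [← Real.rpow_one_add' ht0 (by intro hc; nlinarith)]
        norm_num
      have h5 : fderiv ℝ h ξ w = (t / ‖x‖) * fderiv ℝ h ξ x := by
        rw [hw, map_smul]; rfl
      rw [h5, h4] at h3
      have h6 : t * fderiv ℝ h ξ x ≤ L * (2 ^ p * (t * t ^ (p - 1))) * ‖x‖ := by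
        have := hnn ξ
        rw [div_mul_eq_mul_div, div_le_iff₀ hxn] at h3
        nlinarith
      calc fderiv ℝ h ξ x = (t * fderiv ℝ h ξ x) / t := by field_simp
        _ ≤ (L * (2 ^ p * (t * t ^ (p - 1))) * ‖x‖) / t := by gcongr
        _ = 2 ^ p * L * t ^ (p - 1) * ‖x‖ := by field_simp
    refine le_trans (ContinuousLinearMap.opNorm_le_bound _ (by positivity) fun x => ?_) le_rfl
    rw [Real.norm_eq_abs, abs_le]
    constructor
    · have := key (-x)
      rw [map_neg, norm_neg] at this
      linarith
    · exact key x
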